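/- Let p ≡ 1 (mod 4) be prime, write p = u² + v² with positive integers u, v, and let h ∈ 𝔽_p satisfy h ≡ u/v (mod p). Let (p-1)/2 ≤ L ≤ p-1 and I = {1, ..., L} mod p. Then for every x ∈ I, at least one of hx or h⁻¹x lies in I. -/
import Mathlib


open Finset

/-- With p = u² + v², h = u/v in 𝔽_p, and I = {1,…,L} mod p with
(p-1)/2 ≤ L ≤ p-1, every x ∈ I has hx ∈ I or h⁻¹x ∈ I. -/
theorem rotation_keeps_interval
    (p : ℕ) [Fact p.Prime] (hp4 : p % 4 = 1)
    (u v : ℤ) (hu : 0 < u) (hv : 0 < v) (huv : (p : ℤ) = u ^ 2 + v ^ 2)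
    (h : ZMod p) (hh : h = (u : ZMod p) * (v : ZMod p)⁻¹)
    (L : ℕ) (hL1 : p - 1 ≤ 2 * L) (hL2 : L ≤ p - 1)
    (I : Finset (ZMod p))
    (hI : I = (Finset.Icc 1 L).image (fun i : ℕ => (i : ZMod p))) :
    ∀ x ∈ I, h * x ∈ I ∨ h⁻¹ * x ∈ I := by
  have hprime : p.Prime := Fact.out
  have hp2 : 2 ≤ p := hprime.two_le
  have hp5 : 5 ≤ p := by omega
  -- v is nonzero mod p
  have hvp : v < (p : ℤ) := by nlinarith
  have hv0 : (v : ZMod p) ≠ 0 := by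
    rw [Ne, ZMod.intCast_zmod_eq_zero_iff_dvd]
    intro hdvd
    have := Int.le_of_dvd hv hdvd
    omega
  -- h² = -1
  have hcast : ((u : ZMod p)) ^ 2 = -((v : ZMod p)) ^ 2 := by
    have h0 := congrArg (fun z : ℤ => (z : ZMod p)) huv
    push_cast at h0
    simp [ZMod.natCast_self] at h0
    linear_combination -h0
  have hsq : h ^ 2 = -1 := by
    rw [hh, mul_pow, inv_pow, hcast, neg_mul,
      mul_inv_cancel₀ (pow_ne_zero 2 hv0)]
  have hne : h ≠ 0 := by
    intro h0
    rw [h0] at hsq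
    simp at hsq
  have hinv : h⁻¹ = -h := by
    refine inv_eq_of_mul_eq_one_right ?_
    rw [mul_neg, ← sq, hsq, neg_neg]
  -- key covering lemma
  have key : ∀ y : ZMod p, y ≠ 0 → y ∈ I ∨ -y ∈ I := by
    intro y hy
    have hval : y.val < p := ZMod.val_lt y
    have hv1 : 1 ≤ y.val := by
      rcases Nat.eq_zero_or_pos y.val with h0 | h0
      · exact absurd ((ZMod.val_eq_zero y).mp h0) hy
      · exact h0
    have hyc : ((y.val : ℕ) : ZMod p) = y := by
      simp [ZMod.natCast_val, ZMod.cast_id]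
    by_cases hc : y.val ≤ L
    · left
      rw [hI]
      exact mem_image.2 ⟨y.val, mem_Icc.2 ⟨hv1, hc⟩, hyc⟩
    · right
      rw [hI]
      refine mem_image.2 ⟨p - y.val, mem_Icc.2 ⟨by omega, by omega⟩, ?_⟩
      rw [Nat.cast_sub hval.le, ZMod.natCast_self, zero_sub, hyc]
  intro x hx
  rw [hI] at hx
  obtain ⟨i, hi, rfl⟩ := mem_image.1 hx
  rw [mem_Icc] at hi
  have hx0 : ((i : ℕ) : ZMod p) ≠ 0 := by
    rw [Ne, ZMod.natCast_eq_zero_iff]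
    intro hdvd
    have := Nat.le_of_dvd (by omega) hdvd
    omega
  rcases key _ (mul_ne_zero hne hx0) with hk | hk
  · exact Or.inl hk
  · right
    rw [hinv, neg_mul]
    exact hk
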